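/- There exists a finite point set S with G¹(S) connected such that for every d with 1 ≤ d < 5 − (2/3)√35, some valid Yao edge selection makes Y₃[G^d(S)] disconnected. -/

import Mathlib

/-- Euclidean distance between two points of the plane `ℝ × ℝ`. -/
noncomputable def dE (p q : ℝ × ℝ) : ℝ := Real.sqrt ((p.1 - q.1)^2 + (p.2 - q.2)^2)

lemma dE_comm (p q : ℝ × ℝ) : dE p q = dE q p := by
  unfold dE
  rw [show (p.1 - q.1)^2 = (q.1 - p.1)^2 by ring, show (p.2 - q.2)^2 = (q.2 - p.2)^2 by ring]

/-- The `d`-radius disk graph on a finite point set `S`: two distinct points are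
adjacent iff their Euclidean distance is at most `d`. -/
noncomputable def diskGraph (S : Finset (ℝ × ℝ)) (d : ℝ) :
    SimpleGraph {p : ℝ × ℝ // p ∈ S} where
  Adj p q := p ≠ q ∧ dE p.1 q.1 ≤ d
  symm := ⟨by
    rintro p q ⟨h1, h2⟩
    exact ⟨h1.symm, by rwa [dE_comm]⟩⟩
  loopless := ⟨fun p h => h.1 rfl⟩

/-- The three unit vectors at angles `0°, 120°, 240°`, delimiting the three
half-open 120° cones used to build `Y₃`. -/
noncomputable def u3 : Fin 3 → ℝ × ℝ
  | 0 => ((1 : ℝ), (0 : ℝ))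
  | 1 => (-(1/2 : ℝ), Real.sqrt 3 / 2)
  | 2 => (-(1/2 : ℝ), -(Real.sqrt 3 / 2))

/-- `q` lies in the `i`-th half-open 120° cone of `p`: the cone spanned by the
rays `u3 i` and `u3 (i+1)`, including the first ray and excluding the second. -/
def inCone3 (i : Fin 3) (p q : ℝ × ℝ) : Prop :=
  ∃ s t : ℝ, 0 < s ∧ 0 ≤ t ∧ q - p = s • u3 i + t • u3 (i + 1)

/-- A valid Yao edge selection for `Y₃[G^d(S)]`: in each nonempty cone of each point
of `S`, a closest point of `S` within distance `d` is selected. -/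
structure YaoSel3 (S : Finset (ℝ × ℝ)) (d : ℝ) where
  sel : ℝ × ℝ → Fin 3 → Option (ℝ × ℝ)
  sel_mem : ∀ p i q, sel p i = some q →
    p ∈ S ∧ q ∈ S ∧ inCone3 i p q ∧ dE p q ≤ d
  sel_shortest : ∀ p i q, sel p i = some q →
    ∀ r ∈ S, inCone3 i p r → dE p r ≤ d → dE p q ≤ dE p r
  sel_nonempty : ∀ p ∈ S, ∀ (i : Fin 3), ∀ q ∈ S, inCone3 i p q → dE p q ≤ d →
    (sel p i).isSome

/-- The undirected Yao graph `Y₃[G^d(S)]` induced by a selection `Y`. -/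
noncomputable def yaoGraph3 (S : Finset (ℝ × ℝ)) (d : ℝ) (Y : YaoSel3 S d) :
    SimpleGraph {p : ℝ × ℝ // p ∈ S} where
  Adj p q := p ≠ q ∧
    ((∃ i, Y.sel p.1 i = some q.1) ∨ (∃ i, Y.sel q.1 i = some p.1))
  symm := ⟨by rintro p q ⟨h1, h2⟩; exact ⟨h1.symm, h2.symm⟩⟩
  loopless := ⟨fun p h => h.1 rfl⟩


namespace Y3LB

noncomputable section

def pA : ℝ × ℝ := (0, 0)
def qA : ℝ × ℝ := (0, 1)
def xA : ℝ × ℝ := (1, 0)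
def yA : ℝ × ℝ := (1/2, 24/25)

def SA : Finset (ℝ × ℝ) := {pA, qA, xA, yA}

lemma mem_SA (z : ℝ × ℝ) : z ∈ SA ↔ z = pA ∨ z = qA ∨ z = xA ∨ z = yA := by
  simp [SA]

lemma pA_mem : pA ∈ SA := by simp [SA]
lemma qA_mem : qA ∈ SA := by simp [SA]
lemma xA_mem : xA ∈ SA := by simp [SA]
lemma yA_mem : yA ∈ SA := by simp [SA]

lemma ne_pq : pA ≠ qA := by simp [pA, qA, Prod.ext_iff]
lemma ne_px : pA ≠ xA := by simp [pA, xA, Prod.ext_iff]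
lemma ne_py : pA ≠ yA := by simp [pA, yA, Prod.ext_iff]
lemma ne_qx : qA ≠ xA := by simp [qA, xA, Prod.ext_iff]
lemma ne_qy : qA ≠ yA := by simp [qA, yA, Prod.ext_iff]
lemma ne_xy : xA ≠ yA := by simp [xA, yA, Prod.ext_iff]

-- distance evaluations
lemma dE_pq : dE pA qA = 1 := by
  simp [dE, pA, qA]
lemma dE_px : dE pA xA = 1 := by
  simp [dE, pA, xA]
lemma dE_xp : dE xA pA = 1 := by
  simp [dE, xA, pA]
lemma dE_qp : dE qA pA = 1 := by
  simp [dE, qA, pA]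
lemma dE_qy : dE qA yA = Real.sqrt (629/2500) := by
  unfold dE qA yA; norm_num
lemma dE_yq : dE yA qA = Real.sqrt (629/2500) := by
  unfold dE yA qA; norm_num
lemma dE_py : dE pA yA = Real.sqrt (2929/2500) := by
  unfold dE pA yA; norm_num
lemma dE_yp : dE yA pA = Real.sqrt (2929/2500) := by
  unfold dE yA pA; norm_num
lemma dE_xy : dE xA yA = Real.sqrt (2929/2500) := by
  unfold dE xA yA; norm_num
lemma dE_yx : dE yA xA = Real.sqrt (2929/2500) := by
  unfold dE yA xA; norm_num
lemma dE_qx : dE qA xA = Real.sqrt 2 := by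
  unfold dE qA xA; norm_num
lemma dE_xq : dE xA qA = Real.sqrt 2 := by
  unfold dE xA qA; norm_num

end

end Y3LB

namespace Y3LB

noncomputable section

lemma sqrt3_mul : Real.sqrt 3 * Real.sqrt 3 = 3 :=
  Real.mul_self_sqrt (by norm_num)

lemma sqrt3_pos : (0:ℝ) < Real.sqrt 3 := Real.sqrt_pos.2 (by norm_num)

lemma ineq_629_le_one : Real.sqrt (629/2500) ≤ 1 := by
  rw [show (1:ℝ) = Real.sqrt 1 from Real.sqrt_one.symm]
  exact Real.sqrt_le_sqrt (by norm_num)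

lemma ineq_one_le_2929 : (1:ℝ) ≤ Real.sqrt (2929/2500) := by
  have h := Real.sq_sqrt (show (0:ℝ) ≤ 2929/2500 by norm_num)
  nlinarith [Real.sqrt_nonneg (2929/2500 : ℝ)]

lemma ineq_629_le_sqrt2 : Real.sqrt (629/2500) ≤ Real.sqrt 2 :=
  Real.sqrt_le_sqrt (by norm_num)

lemma ineq_one_le_sqrt2 : (1:ℝ) ≤ Real.sqrt 2 := by
  have h := Real.sq_sqrt (show (0:ℝ) ≤ 2 by norm_num)
  nlinarith [Real.sqrt_nonneg (2:ℝ)]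

lemma ineq_629_le_2929 : Real.sqrt (629/2500) ≤ Real.sqrt (2929/2500) :=
  Real.sqrt_le_sqrt (by norm_num)

/-- Key bound: the threshold is below the long cross distances. -/
lemma key_bound : 5 - 2/3 * Real.sqrt 35 ≤ Real.sqrt (2929/2500) := by
  have h35 := Real.sq_sqrt (show (0:ℝ) ≤ 35 by norm_num)
  have h35n := Real.sqrt_nonneg (35:ℝ)
  have hb : (147/25:ℝ) ≤ Real.sqrt 35 := by nlinarith
  have hs := Real.sq_sqrt (show (0:ℝ) ≤ 2929/2500 by norm_num)
  have hsn := Real.sqrt_nonneg (2929/2500 : ℝ)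
  have hc : (27/25:ℝ) ≤ Real.sqrt (2929/2500) := by nlinarith
  linarith

end

end Y3LB

namespace Y3LB

noncomputable section

lemma fin01 : (0:Fin 3) + 1 = 1 := by decide
lemma fin11 : (1:Fin 3) + 1 = 2 := by decide
lemma fin21 : (2:Fin 3) + 1 = 0 := by decide

-- positive cone memberships for the selection
lemma cone_px : inCone3 0 pA xA := by
  refine ⟨1, 0, one_pos, le_refl 0, ?_⟩
  rw [fin01]
  simp [u3, pA, xA, Prod.ext_iff]

lemma cone_qy : inCone3 2 qA yA := by
  refine ⟨2 * Real.sqrt 3 / 75, 1/2 + Real.sqrt 3 / 75, by positivity, by positivity, ?_⟩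
  rw [fin21]
  have h3 := sqrt3_mul
  simp only [u3, yA, qA, Prod.ext_iff, Prod.smul_mk, Prod.mk_add_mk, Prod.mk_sub_mk,
    smul_eq_mul]
  constructor
  · ring
  · nlinarith

lemma cone_xp : inCone3 1 xA pA := by
  refine ⟨1, 1, one_pos, zero_le_one, ?_⟩
  rw [fin11]
  simp only [u3, pA, xA, Prod.ext_iff, Prod.smul_mk, Prod.mk_add_mk, Prod.mk_sub_mk,
    smul_eq_mul]
  constructor <;> ring

lemma sqrt3_le_two : Real.sqrt 3 ≤ 2 := by
  have h := sqrt3_mul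
  nlinarith [Real.sqrt_nonneg (3:ℝ)]

lemma cone_yq : inCone3 1 yA qA := by
  refine ⟨1/2 + Real.sqrt 3 / 75, 1/2 - Real.sqrt 3 / 75, by positivity, ?_, ?_⟩
  · have := sqrt3_le_two; linarith
  · rw [fin11]
    have h3 := sqrt3_mul
    simp only [u3, yA, qA, Prod.ext_iff, Prod.smul_mk, Prod.mk_add_mk, Prod.mk_sub_mk,
      smul_eq_mul]
    constructor
    · ring
    · nlinarith

lemma not_self_cone0 (z : ℝ × ℝ) : ¬ inCone3 0 z z := by
  rintro ⟨s, t, hs, ht, h⟩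
  rw [fin01, sub_self] at h
  have hp := sqrt3_pos
  simp only [u3, Prod.ext_iff, Prod.smul_mk, Prod.mk_add_mk, smul_eq_mul,
    Prod.fst_zero, Prod.snd_zero] at h
  obtain ⟨h1, h2⟩ := h
  have ht' : 0 < t := by linarith
  nlinarith [mul_pos ht' hp]

lemma not_self_cone1 (z : ℝ × ℝ) : ¬ inCone3 1 z z := by
  rintro ⟨s, t, hs, ht, h⟩
  rw [fin11, sub_self] at h
  simp only [u3, Prod.ext_iff, Prod.smul_mk, Prod.mk_add_mk, smul_eq_mul,
    Prod.fst_zero, Prod.snd_zero] at h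
  obtain ⟨h1, h2⟩ := h
  linarith

lemma not_self_cone2 (z : ℝ × ℝ) : ¬ inCone3 2 z z := by
  rintro ⟨s, t, hs, ht, h⟩
  rw [fin21, sub_self] at h
  have hp := sqrt3_pos
  simp only [u3, Prod.ext_iff, Prod.smul_mk, Prod.mk_add_mk, smul_eq_mul,
    Prod.fst_zero, Prod.snd_zero] at h
  obtain ⟨h1, h2⟩ := h
  nlinarith [mul_pos hs hp]

lemma not_self_cone (i : Fin 3) (z : ℝ × ℝ) : ¬ inCone3 i z z :=
  match i with
  | 0 => not_self_cone0 z
  | 1 => not_self_cone1 z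
  | 2 => not_self_cone2 z

end

end Y3LB

namespace Y3LB

noncomputable section

lemma one_lt_sqrt3 : (1:ℝ) < Real.sqrt 3 := by
  nlinarith [sqrt3_mul, sqrt3_pos]

lemma nc_p1q : ¬ inCone3 1 pA qA := by
  rintro ⟨s, t, hs, ht, h⟩
  rw [fin11] at h
  have h3 := sqrt3_mul; have hp := sqrt3_pos
  simp only [u3, pA, qA, xA, yA, Prod.ext_iff, Prod.smul_mk, Prod.mk_add_mk,
    Prod.mk_sub_mk, smul_eq_mul] at h
  obtain ⟨h1, h2⟩ := h
  linarith

lemma nc_p1x : ¬ inCone3 1 pA xA := by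
  rintro ⟨s, t, hs, ht, h⟩
  rw [fin11] at h
  have h3 := sqrt3_mul; have hp := sqrt3_pos
  simp only [u3, pA, qA, xA, yA, Prod.ext_iff, Prod.smul_mk, Prod.mk_add_mk,
    Prod.mk_sub_mk, smul_eq_mul] at h
  obtain ⟨h1, h2⟩ := h
  linarith

lemma nc_p1y : ¬ inCone3 1 pA yA := by
  rintro ⟨s, t, hs, ht, h⟩
  rw [fin11] at h
  have h3 := sqrt3_mul; have hp := sqrt3_pos
  simp only [u3, pA, qA, xA, yA, Prod.ext_iff, Prod.smul_mk, Prod.mk_add_mk,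
    Prod.mk_sub_mk, smul_eq_mul] at h
  obtain ⟨h1, h2⟩ := h
  linarith

lemma nc_p2q : ¬ inCone3 2 pA qA := by
  rintro ⟨s, t, hs, ht, h⟩
  rw [fin21] at h
  have h3 := sqrt3_mul; have hp := sqrt3_pos
  simp only [u3, pA, qA, xA, yA, Prod.ext_iff, Prod.smul_mk, Prod.mk_add_mk,
    Prod.mk_sub_mk, smul_eq_mul] at h
  obtain ⟨h1, h2⟩ := h
  nlinarith [mul_pos hs hp]

lemma nc_p2x : ¬ inCone3 2 pA xA := by
  rintro ⟨s, t, hs, ht, h⟩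
  rw [fin21] at h
  have h3 := sqrt3_mul; have hp := sqrt3_pos
  simp only [u3, pA, qA, xA, yA, Prod.ext_iff, Prod.smul_mk, Prod.mk_add_mk,
    Prod.mk_sub_mk, smul_eq_mul] at h
  obtain ⟨h1, h2⟩ := h
  nlinarith [mul_pos hs hp]

lemma nc_p2y : ¬ inCone3 2 pA yA := by
  rintro ⟨s, t, hs, ht, h⟩
  rw [fin21] at h
  have h3 := sqrt3_mul; have hp := sqrt3_pos
  simp only [u3, pA, qA, xA, yA, Prod.ext_iff, Prod.smul_mk, Prod.mk_add_mk,
    Prod.mk_sub_mk, smul_eq_mul] at h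
  obtain ⟨h1, h2⟩ := h
  nlinarith [mul_pos hs hp]

lemma nc_q0p : ¬ inCone3 0 qA pA := by
  rintro ⟨s, t, hs, ht, h⟩
  rw [fin01] at h
  have h3 := sqrt3_mul; have hp := sqrt3_pos
  simp only [u3, pA, qA, xA, yA, Prod.ext_iff, Prod.smul_mk, Prod.mk_add_mk,
    Prod.mk_sub_mk, smul_eq_mul] at h
  obtain ⟨h1, h2⟩ := h
  nlinarith [mul_nonneg ht hp.le]

lemma nc_q0x : ¬ inCone3 0 qA xA := by
  rintro ⟨s, t, hs, ht, h⟩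
  rw [fin01] at h
  have h3 := sqrt3_mul; have hp := sqrt3_pos
  simp only [u3, pA, qA, xA, yA, Prod.ext_iff, Prod.smul_mk, Prod.mk_add_mk,
    Prod.mk_sub_mk, smul_eq_mul] at h
  obtain ⟨h1, h2⟩ := h
  nlinarith [mul_nonneg ht hp.le]

lemma nc_q0y : ¬ inCone3 0 qA yA := by
  rintro ⟨s, t, hs, ht, h⟩
  rw [fin01] at h
  have h3 := sqrt3_mul; have hp := sqrt3_pos
  simp only [u3, pA, qA, xA, yA, Prod.ext_iff, Prod.smul_mk, Prod.mk_add_mk,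
    Prod.mk_sub_mk, smul_eq_mul] at h
  obtain ⟨h1, h2⟩ := h
  nlinarith [mul_nonneg ht hp.le]

lemma nc_q1p : ¬ inCone3 1 qA pA := by
  rintro ⟨s, t, hs, ht, h⟩
  rw [fin11] at h
  have h3 := sqrt3_mul; have hp := sqrt3_pos
  simp only [u3, pA, qA, xA, yA, Prod.ext_iff, Prod.smul_mk, Prod.mk_add_mk,
    Prod.mk_sub_mk, smul_eq_mul] at h
  obtain ⟨h1, h2⟩ := h
  linarith

lemma nc_q1x : ¬ inCone3 1 qA xA := by
  rintro ⟨s, t, hs, ht, h⟩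
  rw [fin11] at h
  have h3 := sqrt3_mul; have hp := sqrt3_pos
  simp only [u3, pA, qA, xA, yA, Prod.ext_iff, Prod.smul_mk, Prod.mk_add_mk,
    Prod.mk_sub_mk, smul_eq_mul] at h
  obtain ⟨h1, h2⟩ := h
  linarith

lemma nc_q1y : ¬ inCone3 1 qA yA := by
  rintro ⟨s, t, hs, ht, h⟩
  rw [fin11] at h
  have h3 := sqrt3_mul; have hp := sqrt3_pos
  simp only [u3, pA, qA, xA, yA, Prod.ext_iff, Prod.smul_mk, Prod.mk_add_mk,
    Prod.mk_sub_mk, smul_eq_mul] at h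
  obtain ⟨h1, h2⟩ := h
  linarith

lemma nc_x0p : ¬ inCone3 0 xA pA := by
  rintro ⟨s, t, hs, ht, h⟩
  rw [fin01] at h
  have h3 := sqrt3_mul; have hp := sqrt3_pos
  simp only [u3, pA, qA, xA, yA, Prod.ext_iff, Prod.smul_mk, Prod.mk_add_mk,
    Prod.mk_sub_mk, smul_eq_mul] at h
  obtain ⟨h1, h2⟩ := h
  have ht' : 0 < t := by linarith
  nlinarith [mul_pos ht' hp]

lemma nc_x0q : ¬ inCone3 0 xA qA := by
  rintro ⟨s, t, hs, ht, h⟩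
  rw [fin01] at h
  have h3 := sqrt3_mul; have hp := sqrt3_pos
  simp only [u3, pA, qA, xA, yA, Prod.ext_iff, Prod.smul_mk, Prod.mk_add_mk,
    Prod.mk_sub_mk, smul_eq_mul] at h
  obtain ⟨h1, h2⟩ := h
  have ht2 : 2 < t := by linarith
  nlinarith [one_lt_sqrt3]

lemma nc_x2p : ¬ inCone3 2 xA pA := by
  rintro ⟨s, t, hs, ht, h⟩
  rw [fin21] at h
  have h3 := sqrt3_mul; have hp := sqrt3_pos
  simp only [u3, pA, qA, xA, yA, Prod.ext_iff, Prod.smul_mk, Prod.mk_add_mk,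
    Prod.mk_sub_mk, smul_eq_mul] at h
  obtain ⟨h1, h2⟩ := h
  nlinarith [mul_pos hs hp]

lemma nc_x2q : ¬ inCone3 2 xA qA := by
  rintro ⟨s, t, hs, ht, h⟩
  rw [fin21] at h
  have h3 := sqrt3_mul; have hp := sqrt3_pos
  simp only [u3, pA, qA, xA, yA, Prod.ext_iff, Prod.smul_mk, Prod.mk_add_mk,
    Prod.mk_sub_mk, smul_eq_mul] at h
  obtain ⟨h1, h2⟩ := h
  nlinarith [mul_pos hs hp]

lemma nc_x2y : ¬ inCone3 2 xA yA := by
  rintro ⟨s, t, hs, ht, h⟩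
  rw [fin21] at h
  have h3 := sqrt3_mul; have hp := sqrt3_pos
  simp only [u3, pA, qA, xA, yA, Prod.ext_iff, Prod.smul_mk, Prod.mk_add_mk,
    Prod.mk_sub_mk, smul_eq_mul] at h
  obtain ⟨h1, h2⟩ := h
  nlinarith [mul_pos hs hp]

lemma nc_y0p : ¬ inCone3 0 yA pA := by
  rintro ⟨s, t, hs, ht, h⟩
  rw [fin01] at h
  have h3 := sqrt3_mul; have hp := sqrt3_pos
  simp only [u3, pA, qA, xA, yA, Prod.ext_iff, Prod.smul_mk, Prod.mk_add_mk,
    Prod.mk_sub_mk, smul_eq_mul] at h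
  obtain ⟨h1, h2⟩ := h
  nlinarith [mul_nonneg ht hp.le]

lemma nc_y0q : ¬ inCone3 0 yA qA := by
  rintro ⟨s, t, hs, ht, h⟩
  rw [fin01] at h
  have h3 := sqrt3_mul; have hp := sqrt3_pos
  simp only [u3, pA, qA, xA, yA, Prod.ext_iff, Prod.smul_mk, Prod.mk_add_mk,
    Prod.mk_sub_mk, smul_eq_mul] at h
  obtain ⟨h1, h2⟩ := h
  have ht1 : 1 < t := by linarith
  nlinarith [one_lt_sqrt3]

lemma nc_y0x : ¬ inCone3 0 yA xA := by
  rintro ⟨s, t, hs, ht, h⟩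
  rw [fin01] at h
  have h3 := sqrt3_mul; have hp := sqrt3_pos
  simp only [u3, pA, qA, xA, yA, Prod.ext_iff, Prod.smul_mk, Prod.mk_add_mk,
    Prod.mk_sub_mk, smul_eq_mul] at h
  obtain ⟨h1, h2⟩ := h
  nlinarith [mul_nonneg ht hp.le]

lemma nc_y2q : ¬ inCone3 2 yA qA := by
  rintro ⟨s, t, hs, ht, h⟩
  rw [fin21] at h
  have h3 := sqrt3_mul; have hp := sqrt3_pos
  simp only [u3, pA, qA, xA, yA, Prod.ext_iff, Prod.smul_mk, Prod.mk_add_mk,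
    Prod.mk_sub_mk, smul_eq_mul] at h
  obtain ⟨h1, h2⟩ := h
  nlinarith [mul_pos hs hp]

end

end Y3LB

namespace Y3LB

noncomputable section

def selA : ℝ × ℝ → Fin 3 → Option (ℝ × ℝ) := fun z i =>
  if z = pA ∧ i = 0 then some xA
  else if z = qA ∧ i = 2 then some yA
  else if z = xA ∧ i = 1 then some pA
  else if z = yA ∧ i = 1 then some qA
  else none

lemma selA_eq {z : ℝ × ℝ} {i : Fin 3} {w : ℝ × ℝ} (h : selA z i = some w) :
    (z = pA ∧ i = 0 ∧ w = xA) ∨ (z = qA ∧ i = 2 ∧ w = yA) ∨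
    (z = xA ∧ i = 1 ∧ w = pA) ∨ (z = yA ∧ i = 1 ∧ w = qA) := by
  unfold selA at h
  split_ifs at h with h1 h2 h3 h4
  · exact Or.inl ⟨h1.1, h1.2, (Option.some_inj.mp h).symm⟩
  · exact Or.inr (Or.inl ⟨h2.1, h2.2, (Option.some_inj.mp h).symm⟩)
  · exact Or.inr (Or.inr (Or.inl ⟨h3.1, h3.2, (Option.some_inj.mp h).symm⟩))
  · exact Or.inr (Or.inr (Or.inr ⟨h4.1, h4.2, (Option.some_inj.mp h).symm⟩))

lemma selA_p0 : selA pA 0 = some xA := by simp [selA]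
lemma selA_q2 : selA qA 2 = some yA := by
  unfold selA
  rw [if_neg (by simp [ne_pq.symm]), if_pos ⟨rfl, rfl⟩]
lemma selA_x1 : selA xA 1 = some pA := by
  unfold selA
  rw [if_neg (by simp [ne_px.symm]), if_neg (by simp [ne_qx.symm]), if_pos ⟨rfl, rfl⟩]
lemma selA_y1 : selA yA 1 = some qA := by
  unfold selA
  rw [if_neg (by simp [ne_py.symm]), if_neg (by simp [ne_qy.symm]),
    if_neg (by simp [ne_xy.symm]), if_pos ⟨rfl, rfl⟩]

end

end Y3LB

open Y3LB in
/-- There exists a finite point set `S` with `G¹(S)` connected, such that for every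
`d` with `1 ≤ d < 5 - (2/3)√35` some valid Yao edge selection makes `Y₃[G^d(S)]`
disconnected. -/
theorem y3_lower_bound :
    ∃ S : Finset (ℝ × ℝ), (diskGraph S 1).Connected ∧
      ∀ d : ℝ, 1 ≤ d → d < 5 - (2/3) * Real.sqrt 35 →
        ∃ Y : YaoSel3 S d, ¬ (yaoGraph3 S d Y).Connected := by
  classical
  refine ⟨SA, ?_, ?_⟩
  · -- G¹ is connected
    haveI : Nonempty {z // z ∈ SA} := ⟨⟨pA, pA_mem⟩⟩
    have adj_qp : (diskGraph SA 1).Adj ⟨qA, qA_mem⟩ ⟨pA, pA_mem⟩ := by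
      refine ⟨?_, by rw [dE_qp]⟩
      intro hh
      exact ne_pq (congrArg Subtype.val hh).symm
    have adj_xp : (diskGraph SA 1).Adj ⟨xA, xA_mem⟩ ⟨pA, pA_mem⟩ := by
      refine ⟨?_, by rw [dE_xp]⟩
      intro hh
      exact ne_px (congrArg Subtype.val hh).symm
    have adj_yq : (diskGraph SA 1).Adj ⟨yA, yA_mem⟩ ⟨qA, qA_mem⟩ := by
      refine ⟨?_, by rw [dE_yq]; exact ineq_629_le_one⟩
      intro hh
      exact ne_qy (congrArg Subtype.val hh).symm
    have reach_p : ∀ (z : ℝ × ℝ) (hz : z ∈ SA),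
        (diskGraph SA 1).Reachable ⟨z, hz⟩ ⟨pA, pA_mem⟩ := by
      intro z hz
      rcases (mem_SA z).1 hz with h | h | h | h
      · subst h; exact SimpleGraph.Reachable.refl _
      · subst h; exact adj_qp.reachable
      · subst h; exact adj_xp.reachable
      · subst h; exact adj_yq.reachable.trans adj_qp.reachable
    refine ⟨fun u v => ?_⟩
    exact (reach_p u.1 u.2).trans (reach_p v.1 v.2).symm
  · intro d hd1 hd2
    have hdD : d < Real.sqrt (2929/2500) := lt_of_lt_of_le hd2 (by
      have := key_bound; linarith)
    refine ⟨⟨selA, ?_, ?_, ?_⟩, ?_⟩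
    · -- sel_mem
      intro z i w h
      rcases selA_eq h with ⟨hz, hi, hw⟩ | ⟨hz, hi, hw⟩ | ⟨hz, hi, hw⟩ | ⟨hz, hi, hw⟩ <;>
        subst hz <;> subst hi <;> subst hw
      · exact ⟨pA_mem, xA_mem, cone_px, by rw [dE_px]; exact hd1⟩
      · exact ⟨qA_mem, yA_mem, cone_qy, by rw [dE_qy]; exact le_trans ineq_629_le_one hd1⟩
      · exact ⟨xA_mem, pA_mem, cone_xp, by rw [dE_xp]; exact hd1⟩
      · exact ⟨yA_mem, qA_mem, cone_yq, by rw [dE_yq]; exact le_trans ineq_629_le_one hd1⟩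
    · -- sel_shortest
      intro z i w h r hr hcone hrd
      rcases selA_eq h with ⟨hz, hi, hw⟩ | ⟨hz, hi, hw⟩ | ⟨hz, hi, hw⟩ | ⟨hz, hi, hw⟩ <;>
        subst hz <;> subst hi <;> subst hw <;>
        (rcases (mem_SA r).1 hr with hr' | hr' | hr' | hr' <;> subst hr')
      · exact absurd hcone (not_self_cone0 pA)
      · rw [dE_px, dE_pq]
      · rw [dE_px]
      · rw [dE_px, dE_py]; exact ineq_one_le_2929
      · rw [dE_qy, dE_qp]; exact ineq_629_le_one
      · exact absurd hcone (not_self_cone2 qA)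
      · rw [dE_qy, dE_qx]; exact ineq_629_le_sqrt2
      · rw [dE_qy]
      · rw [dE_xp]
      · rw [dE_xp, dE_xq]; exact ineq_one_le_sqrt2
      · exact absurd hcone (not_self_cone1 xA)
      · rw [dE_xp, dE_xy]; exact ineq_one_le_2929
      · rw [dE_yq, dE_yp]; exact ineq_629_le_2929
      · rw [dE_yq]
      · rw [dE_yq, dE_yx]; exact ineq_629_le_2929
      · exact absurd hcone (not_self_cone1 yA)
    · -- sel_nonempty
      intro z hz i v hv hcone hvd
      rcases (mem_SA z).1 hz with hz' | hz' | hz' | hz' <;> subst hz' <;> fin_cases i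
      · show (selA pA 0).isSome; rw [selA_p0]; rfl
      · exfalso
        rcases (mem_SA v).1 hv with h | h | h | h <;> subst h
        · exact not_self_cone1 pA hcone
        · exact nc_p1q hcone
        · exact nc_p1x hcone
        · exact nc_p1y hcone
      · exfalso
        rcases (mem_SA v).1 hv with h | h | h | h <;> subst h
        · exact not_self_cone2 pA hcone
        · exact nc_p2q hcone
        · exact nc_p2x hcone
        · exact nc_p2y hcone
      · exfalso
        rcases (mem_SA v).1 hv with h | h | h | h <;> subst h
        · exact nc_q0p hcone
        · exact not_self_cone0 qA hcone
        · exact nc_q0x hcone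
        · exact nc_q0y hcone
      · exfalso
        rcases (mem_SA v).1 hv with h | h | h | h <;> subst h
        · exact nc_q1p hcone
        · exact not_self_cone1 qA hcone
        · exact nc_q1x hcone
        · exact nc_q1y hcone
      · show (selA qA 2).isSome; rw [selA_q2]; rfl
      · exfalso
        rcases (mem_SA v).1 hv with h | h | h | h <;> subst h
        · exact nc_x0p hcone
        · exact nc_x0q hcone
        · exact not_self_cone0 xA hcone
        · rw [dE_xy] at hvd; linarith
      · show (selA xA 1).isSome; rw [selA_x1]; rfl
      · exfalso
        rcases (mem_SA v).1 hv with h | h | h | h <;> subst h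
        · exact nc_x2p hcone
        · exact nc_x2q hcone
        · exact not_self_cone2 xA hcone
        · exact nc_x2y hcone
      · exfalso
        rcases (mem_SA v).1 hv with h | h | h | h <;> subst h
        · exact nc_y0p hcone
        · exact nc_y0q hcone
        · exact nc_y0x hcone
        · exact not_self_cone0 yA hcone
      · show (selA yA 1).isSome; rw [selA_y1]; rfl
      · exfalso
        rcases (mem_SA v).1 hv with h | h | h | h <;> subst h
        · rw [dE_yp] at hvd; linarith
        · exact nc_y2q hcone
        · rw [dE_yx] at hvd; linarith
        · exact not_self_cone2 yA hcone
    · -- the Yao graph is disconnected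
      intro hc
      obtain ⟨w⟩ := hc.preconnected ⟨pA, pA_mem⟩ ⟨qA, qA_mem⟩
      have main : ∀ (Y : YaoSel3 SA d), Y.sel = selA → ∀ {u v : {z // z ∈ SA}}
          (w : (yaoGraph3 SA d Y).Walk u v),
          (u.1 = pA ∨ u.1 = xA) → (v.1 = pA ∨ v.1 = xA) := by
        intro Y hY u v w
        induction w with
        | nil => exact id
        | cons h wtl ih =>
          intro hu
          apply ih
          obtain ⟨hne, hsel⟩ := h
          rw [hY] at hsel
          rcases hsel with ⟨i, hs⟩ | ⟨i, hs⟩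
          · rcases selA_eq hs with ⟨hz, _, hw⟩ | ⟨hz, _, hw⟩ | ⟨hz, _, hw⟩ | ⟨hz, _, hw⟩
            · exact Or.inr hw
            · rw [hz] at hu
              rcases hu with h' | h'
              · exact absurd h' ne_pq.symm
              · exact absurd h' ne_qx
            · exact Or.inl hw
            · rw [hz] at hu
              rcases hu with h' | h'
              · exact absurd h' ne_py.symm
              · exact absurd h' ne_xy.symm
          · rcases selA_eq hs with ⟨hz, _, hw⟩ | ⟨hz, _, hw⟩ | ⟨hz, _, hw⟩ | ⟨hz, _, hw⟩
            · exact Or.inl hz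
            · rw [hw] at hu
              rcases hu with h' | h'
              · exact absurd h' ne_py.symm
              · exact absurd h' ne_xy.symm
            · exact Or.inr hz
            · rw [hw] at hu
              rcases hu with h' | h'
              · exact absurd h' ne_pq.symm
              · exact absurd h' ne_qx
      have := main _ rfl w (Or.inl rfl)
      rcases this with h | h
      · exact ne_pq h.symm
      · exact ne_qx h
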